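/- Suppose S ⊆ V is an independent set in G and the neighborhoods N(s), s ∈ S, are pairwise disjoint. Then for every S' ⊆ S, 2^{∑_{s∈S'} |N(s)|} · |B(S')| = 2^{|V∖S|} · ∏_{s∈S'} (2^{|N(s)|} − 1). -/

import Mathlib

open Finset

/-- `Bset G S S'` is `B(S')`: the collection of all subsets `V' ⊆ V∖S` with
`V' ∩ N(s) ≠ ∅` for every `s ∈ S'`. -/
def Bset {V : Type*} [Fintype V] [DecidableEq V] (G : SimpleGraph V) [DecidableRel G.Adj]
    (S S' : Finset V) : Finset (Finset V) :=
  (Finset.univ \ S).powerset.filter fun V' => ∀ s ∈ S', V' ∩ G.neighborFinset s ≠ ∅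

section aux
variable {V : Type*} [Fintype V] [DecidableEq V] (G : SimpleGraph V) [DecidableRel G.Adj]

lemma mem_Bset {S S' : Finset V} {W : Finset V} :
    W ∈ Bset G S S' ↔ W ⊆ Finset.univ \ S ∧ ∀ s ∈ S', W ∩ G.neighborFinset s ≠ ∅ := by
  simp [Bset]

lemma cardA (S S' : Finset V) (N : Finset V)
    (hNS : N ⊆ Finset.univ \ S)
    (hNd : ∀ t ∈ S', N ∩ G.neighborFinset t = ∅) :
    (Bset G S S').card
      = 2 ^ N.card * ((Bset G S S').filter (fun W => W ∩ N = ∅)).card := by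
  have key : ∀ (W A : Finset V), A ⊆ N → ∀ t ∈ S',
      (W ∪ A) ∩ G.neighborFinset t = W ∩ G.neighborFinset t := by
    intro W A hA t ht
    have : A ∩ G.neighborFinset t = ∅ :=
      subset_empty.mp ((hNd t ht) ▸ inter_subset_inter_right hA)
    rw [union_inter_distrib_right, this, union_empty]
  rw [← Finset.card_powerset, ← Finset.card_product]
  apply Finset.card_nbij' (fun W => (W ∩ N, W \ N)) (fun p => p.2 ∪ p.1)
  · intro W hW
    rw [mem_coe, mem_Bset] at hW
    simp only [mem_coe, mem_product, mem_powerset, mem_filter, mem_Bset]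
    refine ⟨inter_subset_right, ⟨(sdiff_subset).trans hW.1, ?_⟩, ?_⟩
    · intro t ht
      have : (W \ N) ∪ (W ∩ N) = W := sdiff_union_inter W N
      have h2 := key (W \ N) (W ∩ N) inter_subset_right t ht
      rw [this] at h2
      rw [← h2]; exact hW.2 t ht
    · rw [sdiff_inter_self]
  · intro p hp
    simp only [mem_coe, mem_product, mem_powerset, mem_filter, mem_Bset] at hp
    rw [mem_coe, mem_Bset]
    refine ⟨union_subset hp.2.1.1 (hp.1.trans hNS), ?_⟩
    intro t ht
    rw [key _ _ hp.1 t ht]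
    exact hp.2.1.2 t ht
  · intro W hW
    exact sdiff_union_inter W N
  · intro p hp
    obtain ⟨A, W⟩ := p
    simp only [mem_coe, mem_product, mem_powerset, mem_filter, mem_Bset] at hp
    obtain ⟨hA, ⟨_, _⟩, hW0⟩ := hp
    show ((W ∪ A) ∩ N, (W ∪ A) \ N) = (A, W)
    rw [union_inter_distrib_right, hW0, empty_union, inter_eq_left.mpr hA,
      union_sdiff_distrib, sdiff_eq_empty_iff_subset.mpr hA, union_empty,
      sdiff_eq_self_of_disjoint (disjoint_iff_inter_eq_empty.mpr hW0)]

lemma cardB (S S' : Finset V) (s : V) (hsS' : s ∉ S')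
    (hNS : G.neighborFinset s ⊆ Finset.univ \ S)
    (hNd : ∀ t ∈ S', G.neighborFinset s ∩ G.neighborFinset t = ∅) :
    (Bset G S (insert s S')).card
      = (2 ^ (G.neighborFinset s).card - 1)
        * ((Bset G S S').filter (fun W => W ∩ G.neighborFinset s = ∅)).card := by
  set N := G.neighborFinset s with hN
  have key : ∀ (W A : Finset V), A ⊆ N → ∀ t ∈ S',
      (W ∪ A) ∩ G.neighborFinset t = W ∩ G.neighborFinset t := by
    intro W A hA t ht
    have : A ∩ G.neighborFinset t = ∅ :=
      subset_empty.mp ((hNd t ht) ▸ inter_subset_inter_right hA)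
    rw [union_inter_distrib_right, this, union_empty]
  have hcardP : (N.powerset.filter (fun A => A ≠ ∅)).card = 2 ^ N.card - 1 := by
    have : N.powerset.filter (fun A => A ≠ ∅) = N.powerset.erase ∅ := by
      ext A; simp [and_comm]
    rw [this, card_erase_of_mem (by simp), card_powerset]
  rw [← hcardP, ← Finset.card_product]
  apply Finset.card_nbij' (fun W => (W ∩ N, W \ N)) (fun p => p.2 ∪ p.1)
  · intro W hW
    rw [mem_coe, mem_Bset] at hW
    simp only [mem_coe, mem_product, mem_powerset, mem_filter, mem_Bset]
    refine ⟨⟨inter_subset_right, hW.2 s (mem_insert_self s S')⟩,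
      ⟨(sdiff_subset).trans hW.1, ?_⟩, by rw [sdiff_inter_self]⟩
    intro t ht
    have h2 := key (W \ N) (W ∩ N) inter_subset_right t ht
    rw [sdiff_union_inter] at h2
    rw [← h2]; exact hW.2 t (mem_insert_of_mem ht)
  · intro p hp
    simp only [mem_coe, mem_product, mem_powerset, mem_filter, mem_Bset] at hp
    obtain ⟨⟨hA, hAne⟩, ⟨hWsub, hWmeet⟩, hW0⟩ := hp
    rw [mem_coe, mem_Bset]
    refine ⟨union_subset hWsub (hA.trans hNS), ?_⟩
    intro t ht
    rcases mem_insert.mp ht with rfl | ht'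
    · rw [union_inter_distrib_right, hW0, empty_union, inter_eq_left.mpr hA]
      exact hAne
    · rw [key _ _ hA t ht']; exact hWmeet t ht'
  · intro W hW
    exact sdiff_union_inter W N
  · intro p hp
    obtain ⟨A, W⟩ := p
    simp only [mem_coe, mem_product, mem_powerset, mem_filter, mem_Bset] at hp
    obtain ⟨⟨hA, _⟩, _, hW0⟩ := hp
    show ((W ∪ A) ∩ N, (W ∪ A) \ N) = (A, W)
    rw [union_inter_distrib_right, hW0, empty_union, inter_eq_left.mpr hA,
      union_sdiff_distrib, sdiff_eq_empty_iff_subset.mpr hA, union_empty,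
      sdiff_eq_self_of_disjoint (disjoint_iff_inter_eq_empty.mpr hW0)]

end aux

theorem card_Bset_eq
    {V : Type*} [Fintype V] [DecidableEq V] (G : SimpleGraph V) [DecidableRel G.Adj]
    (S : Finset V) (hS : ∀ u ∈ S, ∀ v ∈ S, ¬ G.Adj u v)
    (hdisj : ∀ s₁ ∈ S, ∀ s₂ ∈ S, s₁ ≠ s₂ →
      G.neighborFinset s₁ ∩ G.neighborFinset s₂ = ∅)
    (S' : Finset V) (hS' : S' ⊆ S) :
    2 ^ (∑ s ∈ S', (G.neighborFinset s).card) * (Bset G S S').card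
      = 2 ^ (Finset.univ \ S).card * ∏ s ∈ S', (2 ^ (G.neighborFinset s).card - 1) := by
  induction S' using Finset.induction_on with
  | empty =>
    simp only [Finset.sum_empty, Finset.prod_empty, pow_zero, one_mul, mul_one]
    have : Bset G S ∅ = (Finset.univ \ S).powerset := by
      ext W; simp [Bset]
    rw [this, Finset.card_powerset]
  | @insert s S' hsS' ih =>
    have hsS : s ∈ S := hS' (Finset.mem_insert_self s S')
    have hS'S : S' ⊆ S := (Finset.subset_insert s S').trans hS'
    have hNS : G.neighborFinset s ⊆ Finset.univ \ S := by
      intro v hv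
      rw [SimpleGraph.mem_neighborFinset] at hv
      simp only [Finset.mem_sdiff, Finset.mem_univ, true_and]
      intro hvS
      exact hS s hsS v hvS hv
    have hNd : ∀ t ∈ S', G.neighborFinset s ∩ G.neighborFinset t = ∅ := by
      intro t ht
      exact hdisj s hsS t (hS'S ht) (fun h => hsS' (h ▸ ht))
    have hA := cardA G S S' (G.neighborFinset s) hNS hNd
    have hB := cardB G S S' s hsS' hNS hNd
    rw [Finset.sum_insert hsS', Finset.prod_insert hsS', hB]
    specialize ih hS'S
    rw [hA] at ih
    set n := (G.neighborFinset s).card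
    set b := ((Bset G S S').filter (fun W => W ∩ G.neighborFinset s = ∅)).card
    calc 2 ^ (n + ∑ s ∈ S', (G.neighborFinset s).card) * ((2 ^ n - 1) * b)
        = (2 ^ n - 1) * (2 ^ (∑ s ∈ S', (G.neighborFinset s).card) * (2 ^ n * b)) := by ring
      _ = (2 ^ n - 1) * (2 ^ (Finset.univ \ S).card
            * ∏ s ∈ S', (2 ^ (G.neighborFinset s).card - 1)) := by rw [ih]
      _ = 2 ^ (Finset.univ \ S).card
            * ((2 ^ n - 1) * ∏ s ∈ S', (2 ^ (G.neighborFinset s).card - 1)) := by ring
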